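/- Let X^{(1)}, X^{(2)}, … be i.i.d. copies of a random vector X = (X₁,…,X_d) whose joint distribution function F is a MEV distribution with unit Fréchet marginals, set l(x₁,…,x_d) = −log F(x₁,…,x_d), and fix x₁,…,x_d > 0. Let F̂_j(u) = (n+1)^{-1} Σ_{k=1}^n 1{X_j^{(k)} ≤ u} denote the (rank-based) empirical distribution function of the j-th coordinate, let Ŷ_n = n^{-1} Σ_{i=1}^n ( F̂₁(X₁^{(i)})^{x₁} ∨ … ∨ F̂_d(X_d^{(i)})^{x_d} ), and define the rank-based estimator l̂_n(x₁,…,x_d) = Ŷ_n / (1 − Ŷ_n). Then l̂_n(x₁,…,x_d) → l(x₁,…,x_d) almost surely as n → ∞. -/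

import Mathlib

open MeasureTheory Filter Finset

/-- The joint distribution function of the random vector `X` under `μ`. -/
noncomputable def jointCDF {Ω : Type*} [MeasurableSpace Ω] (μ : Measure Ω) {d : ℕ}
    (X : Fin d → Ω → ℝ) (x : Fin d → ℝ) : ℝ :=
  (μ {ω | ∀ i, X i ω ≤ x i}).toReal

/-- The marginal distribution function of the `i`-th coordinate of `X` under `μ`. -/
noncomputable def margCDF {Ω : Type*} [MeasurableSpace Ω] (μ : Measure Ω) {d : ℕ}
    (X : Fin d → Ω → ℝ) (i : Fin d) (u : ℝ) : ℝ :=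
  (μ {ω | X i ω ≤ u}).toReal

/-- `l^{(I₁,I₂)}(x,y) = -log F(a₁,…,a_d)` where `aᵢ = x` on `I₁`, `aᵢ = y` on `I₂` and
`aᵢ = ∞` otherwise (taking the limit of `F` in those arguments, i.e. dropping the
corresponding constraints). -/
noncomputable def mevL {Ω : Type*} [MeasurableSpace Ω] (μ : Measure Ω) {d : ℕ}
    (X : Fin d → Ω → ℝ) (I₁ I₂ : Finset (Fin d)) (x y : ℝ) : ℝ :=
  -Real.log (μ {ω | (∀ i ∈ I₁, X i ω ≤ x) ∧ (∀ j ∈ I₂, X j ω ≤ y)}).toReal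

/-- The extremal coefficient `ε_I = l^{(I,∅)}(1,1)` of the sub-vector `X_I`. -/
noncomputable def extCoef {Ω : Type*} [MeasurableSpace Ω] (μ : Measure Ω) {d : ℕ}
    (X : Fin d → Ω → ℝ) (I : Finset (Fin d)) : ℝ :=
  mevL μ X I ∅ 1 1

/-- `M(I) = max_{i ∈ I} F_i(X_i)`. -/
noncomputable def Msub {Ω : Type*} [MeasurableSpace Ω] (μ : Measure Ω) {d : ℕ}
    (X : Fin d → Ω → ℝ) (I : Finset (Fin d)) (hI : I.Nonempty) (ω : Ω) : ℝ :=
  I.sup' hI fun i => margCDF μ X i (X i ω)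

/-- The stable tail dependence function `l(x₁,…,x_d) = -log F(x₁,…,x_d)`. -/
noncomputable def stdf {Ω : Type*} [MeasurableSpace Ω] (μ : Measure Ω) {d : ℕ}
    (X : Fin d → Ω → ℝ) (x : Fin d → ℝ) : ℝ :=
  -Real.log (jointCDF μ X x)

/-- `X` has a multivariate extreme value (max-stable) distribution with unit Fréchet
marginals under the probability measure `μ`. -/
structure IsMEVFrechet {Ω : Type*} [MeasurableSpace Ω] (μ : Measure Ω) {d : ℕ}
    (X : Fin d → Ω → ℝ) : Prop where
  meas : ∀ i, Measurable (X i)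
  frechet : ∀ i, ∀ u : ℝ, 0 < u → margCDF μ X i u = Real.exp (-u⁻¹)
  maxStable : ∀ t : ℝ, 0 < t → ∀ x : Fin d → ℝ, (∀ i, 0 < x i) →
    jointCDF μ X (fun i => t * x i) ^ t = jointCDF μ X x

/-- The rank-based empirical distribution function
`F̂_j(u) = (n+1)⁻¹ Σ_{k<n} 1{X_j^{(k)} ≤ u}`. -/
noncomputable def empCDF {Ω : Type*} {d : ℕ} (Xs : ℕ → Ω → Fin d → ℝ)
    (n : ℕ) (j : Fin d) (u : ℝ) (ω : Ω) : ℝ :=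
  ((n : ℝ) + 1)⁻¹ * ∑ k ∈ Finset.range n, if Xs k ω j ≤ u then 1 else 0

/-- The rank-based sample mean
`Ŷ_n = n⁻¹ Σ_{i<n} (F̂₁(X₁^{(i)})^{x₁} ∨ … ∨ F̂_d(X_d^{(i)})^{x_d})`. -/
noncomputable def Yhat {Ω : Type*} {d : ℕ} (hd : 0 < d) (Xs : ℕ → Ω → Fin d → ℝ)
    (x : Fin d → ℝ) (n : ℕ) (ω : Ω) : ℝ :=
  (n : ℝ)⁻¹ * ∑ i ∈ Finset.range n,
    Finset.univ.sup' ⟨⟨0, hd⟩, Finset.mem_univ _⟩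
      fun j => empCDF Xs n j (Xs i ω j) ω ^ x j

section Aux

open ProbabilityTheory

/-! ### Generic `sup'` lemmas -/

lemma measurable_finset_sup' {ι α : Type*} [MeasurableSpace α] {s : Finset ι} (hs : s.Nonempty)
    (f : ι → α → ℝ) (hf : ∀ i, Measurable (f i)) :
    Measurable fun a => s.sup' hs fun i => f i a := by
  induction hs using Finset.Nonempty.cons_induction with
  | singleton a => simpa using hf a
  | cons a s h hs ih =>
    have heq : (fun a_1 => (Finset.cons a s h).sup' (Finset.cons_nonempty h) fun i => f i a_1)
        = fun a_1 => max (f a a_1) (s.sup' hs fun i => f i a_1) := by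
      funext z
      exact Finset.sup'_cons hs (fun i => f i z)
    rw [heq]
    exact (hf a).max ih

lemma abs_sup'_sub_sup'_le {ι : Type*} {s : Finset ι} (hs : s.Nonempty) (f g : ι → ℝ) (ε : ℝ)
    (h : ∀ i ∈ s, |f i - g i| ≤ ε) : |s.sup' hs f - s.sup' hs g| ≤ ε := by
  rw [abs_le]
  constructor
  · rw [neg_le, neg_sub, sub_le_iff_le_add]
    apply Finset.sup'_le
    intro i hi
    have h1 := (abs_le.1 (h i hi)).1
    have h2 := Finset.le_sup' f hi
    linarith
  · rw [sub_le_iff_le_add]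
    apply Finset.sup'_le
    intro i hi
    have h1 := (abs_le.1 (h i hi)).2
    have h2 := Finset.le_sup' g hi
    linarith

variable {Ω : Type*} [MeasurableSpace Ω] {μ : Measure Ω} [IsProbabilityMeasure μ] {d : ℕ}
  {X : Fin d → Ω → ℝ}

/-! ### Basic properties of the CDFs -/

lemma margCDF_nonneg (i : Fin d) (u : ℝ) : 0 ≤ margCDF μ X i u := ENNReal.toReal_nonneg

lemma margCDF_le_one (i : Fin d) (u : ℝ) : margCDF μ X i u ≤ 1 := by
  rw [margCDF]
  exact ENNReal.toReal_le_of_le_ofReal one_pos.le (by simpa using prob_le_one)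

lemma margCDF_mono (i : Fin d) : Monotone (margCDF μ X i) := fun u v huv =>
  ENNReal.toReal_mono (measure_ne_top μ _)
    (measure_mono fun ω hω => le_trans hω huv)

lemma margCDF_measurable (i : Fin d) : Measurable (margCDF μ X i) :=
  (margCDF_mono i).measurable

lemma jointCDF_nonneg (x : Fin d → ℝ) : 0 ≤ jointCDF μ X x := ENNReal.toReal_nonneg

lemma jointCDF_le_one (x : Fin d → ℝ) : jointCDF μ X x ≤ 1 := by
  rw [jointCDF]
  exact ENNReal.toReal_le_of_le_ofReal one_pos.le (by simpa using prob_le_one)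

lemma IsMEVFrechet.margCDF_nonpos (hmev : IsMEVFrechet μ X) (i : Fin d) {u : ℝ} (hu : u ≤ 0) :
    margCDF μ X i u = 0 := by
  have key : ∀ n : ℕ, margCDF μ X i u ≤ Real.exp (-((n : ℝ) + 1)) := by
    intro n
    have h1 : (0:ℝ) < ((n : ℝ) + 1)⁻¹ := by positivity
    have := hmev.frechet i (((n : ℝ) + 1)⁻¹) h1
    rw [inv_inv] at this
    rw [← this]
    exact margCDF_mono i (hu.trans h1.le)
  have hlim : Filter.Tendsto (fun n : ℕ => Real.exp (-((n : ℝ) + 1))) atTop (nhds 0) := by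
    apply Real.tendsto_exp_atBot.comp
    apply Filter.tendsto_neg_atBot_iff.mpr
    exact Filter.tendsto_atTop_add_const_right _ 1 tendsto_natCast_atTop_atTop
  have := ge_of_tendsto' hlim key
  linarith [margCDF_nonneg (μ := μ) (X := X) i u]

lemma IsMEVFrechet.null_nonpos (hmev : IsMEVFrechet μ X) (i : Fin d) {u : ℝ} (hu : u ≤ 0) :
    μ {ω | X i ω ≤ u} = 0 := by
  have h := hmev.margCDF_nonpos i hu
  rw [margCDF] at h
  exact (ENNReal.toReal_eq_zero_iff _).1 h |>.resolve_right (measure_ne_top μ _)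

/-- Positivity of the joint CDF at positive arguments. -/
lemma IsMEVFrechet.jointCDF_pos (hmev : IsMEVFrechet μ X) {x : Fin d → ℝ} (hx : ∀ i, 0 < x i) :
    0 < jointCDF μ X x := by
  rcases lt_or_eq_of_le (jointCDF_nonneg (μ := μ) (X := X) x) with h | h
  · exact h
  exfalso
  -- `h : 0 = jointCDF μ X x`
  have h0 : ∀ n : ℕ, jointCDF μ X (fun i => ((n : ℝ) + 1) * x i) = 0 := by
    intro n
    have ht : (0:ℝ) < (n : ℝ) + 1 := by positivity
    have hms := hmev.maxStable ((n : ℝ) + 1) ht x hx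
    by_contra hne
    have hpos : 0 < jointCDF μ X (fun i => ((n : ℝ) + 1) * x i) :=
      lt_of_le_of_ne (jointCDF_nonneg _) (Ne.symm hne)
    have := Real.rpow_pos_of_pos hpos ((n : ℝ) + 1)
    rw [hms, ← h] at this
    exact lt_irrefl _ this
  have hnull : ∀ n : ℕ, μ {ω | ∀ i, X i ω ≤ ((n : ℝ) + 1) * x i} = 0 := by
    intro n
    have := h0 n
    rw [jointCDF] at this
    exact (ENNReal.toReal_eq_zero_iff _).1 this |>.resolve_right (measure_ne_top μ _)
  have huniv : (Set.univ : Set Ω) ⊆ ⋃ n : ℕ, {ω | ∀ i, X i ω ≤ ((n : ℝ) + 1) * x i} := by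
    intro ω _
    have hex : ∀ i, ∃ n : ℕ, X i ω ≤ ((n : ℝ) + 1) * x i := by
      intro i
      obtain ⟨n, hn⟩ := exists_nat_gt (X i ω / x i)
      refine ⟨n, ?_⟩
      have hxi := hx i
      rw [div_lt_iff₀ hxi] at hn
      nlinarith
    choose f hf using hex
    refine Set.mem_iUnion.2 ⟨Finset.univ.sup f, fun i => ?_⟩
    refine (hf i).trans ?_
    have : (f i : ℝ) ≤ (Finset.univ.sup f : ℕ) := by
      exact_mod_cast Finset.le_sup (Finset.mem_univ i)
    nlinarith [hx i]
  have : μ (Set.univ : Set Ω) = 0 :=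
    le_antisymm ((measure_mono huniv).trans (le_of_eq (measure_iUnion_null hnull))) zero_le
  simp at this


/-! ### Homogeneity and the distribution of `Z` -/

lemma stdf_nonneg (x : Fin d → ℝ) : 0 ≤ stdf μ X x := by
  rw [stdf, neg_nonneg]
  exact Real.log_nonpos (jointCDF_nonneg _) (jointCDF_le_one _)

lemma IsMEVFrechet.jointCDF_eq_exp (hmev : IsMEVFrechet μ X) {x : Fin d → ℝ}
    (hx : ∀ i, 0 < x i) : jointCDF μ X x = Real.exp (-stdf μ X x) := by
  rw [stdf, neg_neg, Real.exp_log (hmev.jointCDF_pos hx)]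

lemma IsMEVFrechet.jointCDF_scale (hmev : IsMEVFrechet μ X) {x : Fin d → ℝ}
    (hx : ∀ i, 0 < x i) {t : ℝ} (ht : 0 < t) :
    jointCDF μ X (fun i => t * x i) = Real.exp (-stdf μ X x * t⁻¹) := by
  have hms := hmev.maxStable t ht x hx
  have ha : jointCDF μ X (fun i => t * x i)
      = (jointCDF μ X (fun i => t * x i) ^ t) ^ t⁻¹ := by
    rw [← Real.rpow_mul (jointCDF_nonneg _), mul_inv_cancel₀ ht.ne', Real.rpow_one]
  rw [ha, hms, hmev.jointCDF_eq_exp hx, ← Real.exp_mul]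

/-- The transformed max variable, as a function of the vector of coordinates. -/
noncomputable def Zfun (μ : Measure Ω) (X : Fin d → Ω → ℝ) (hd : 0 < d) (x : Fin d → ℝ)
    (v : Fin d → ℝ) : ℝ :=
  Finset.univ.sup' ⟨⟨0, hd⟩, Finset.mem_univ _⟩ fun j => margCDF μ X j (v j) ^ x j

lemma Zfun_nonneg (hd : 0 < d) {x : Fin d → ℝ} (v : Fin d → ℝ) :
    0 ≤ Zfun μ X hd x v :=
  Finset.le_sup'_of_le _ (Finset.mem_univ (⟨0, hd⟩ : Fin d))
    (Real.rpow_nonneg (margCDF_nonneg _ _) _)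

lemma Zfun_le_one (hd : 0 < d) {x : Fin d → ℝ} (hx : ∀ i, 0 ≤ x i) (v : Fin d → ℝ) :
    Zfun μ X hd x v ≤ 1 :=
  Finset.sup'_le _ _ fun j _ =>
    Real.rpow_le_one (margCDF_nonneg _ _) (margCDF_le_one _ _) (hx j)

lemma Zfun_measurable (hd : 0 < d) {x : Fin d → ℝ} (hx : ∀ i, 0 ≤ x i) :
    Measurable (Zfun μ X hd x) :=
  measurable_finset_sup' _ _ fun j =>
    (Real.continuous_rpow_const (hx j)).measurable.comp
      ((margCDF_measurable j).comp (measurable_pi_apply j))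

lemma IsMEVFrechet.ae_pos (hmev : IsMEVFrechet μ X) : ∀ᵐ ω ∂μ, ∀ j, 0 < X j ω := by
  rw [ae_iff]
  push_neg
  have : {ω | ∃ j, X j ω ≤ 0} = ⋃ j, {ω | X j ω ≤ 0} := by
    ext ω; simp
  rw [Set.setOf_exists]
  exact measure_iUnion_null fun j => hmev.null_nonpos j le_rfl

/-- The distribution function of `Z = max_j F_j(X_j)^{x_j}` is `u ↦ u^l` on `(0,1)`. -/
lemma IsMEVFrechet.Zfun_cdf (hmev : IsMEVFrechet μ X) (hd : 0 < d) {x : Fin d → ℝ}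
    (hx : ∀ i, 0 < x i) {u : ℝ} (hu0 : 0 < u) (hu1 : u < 1) :
    (μ {ω | Zfun μ X hd x (fun j => X j ω) ≤ u}).toReal = u ^ stdf μ X x := by
  have hlogu : Real.log u < 0 := Real.log_neg hu0 hu1
  set t : ℝ := (-Real.log u)⁻¹ with ht_def
  have ht : 0 < t := inv_pos.2 (by linarith)
  have hsets : {ω | Zfun μ X hd x (fun j => X j ω) ≤ u}
      =ᵐ[μ] ({ω | ∀ i, X i ω ≤ t * x i} : Set Ω) := by
    rw [Filter.eventuallyEq_set]
    filter_upwards [hmev.ae_pos] with ω hω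
    simp only [Set.mem_setOf_eq, Zfun, Finset.sup'_le_iff, Finset.mem_univ, true_implies]
    constructor
    · intro h j
      have hj := (Finset.sup'_le_iff _ _).1 h j (Finset.mem_univ _)
      rw [hmev.frechet j _ (hω j), ← Real.exp_mul, ← Real.le_log_iff_exp_le hu0] at hj
      -- hj : -(X j ω)⁻¹ * x j ≤ log u
      have h1 : -Real.log u ≤ (X j ω)⁻¹ * x j := by linarith
      rw [inv_mul_eq_div, le_div_iff₀ (hω j)] at h1
      -- h1 : -log u * X j ω ≤ x j
      rw [ht_def, inv_mul_eq_div, le_div_iff₀ (by linarith : (0:ℝ) < -Real.log u)]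
      linarith
    · intro h; refine (Finset.sup'_le_iff _ _).2 fun j _ => ?_
      have hj := h j
      rw [hmev.frechet j _ (hω j), ← Real.exp_mul, ← Real.le_log_iff_exp_le hu0]
      rw [ht_def, inv_mul_eq_div, le_div_iff₀ (by linarith : (0:ℝ) < -Real.log u)] at hj
      -- hj : X j ω * -log u ≤ x j
      have h1 : -Real.log u ≤ (X j ω)⁻¹ * x j := by
        rw [inv_mul_eq_div, le_div_iff₀ (hω j)]
        linarith
      linarith
  rw [measure_congr hsets]
  have : (μ {ω | ∀ i, X i ω ≤ t * x i}).toReal = jointCDF μ X (fun i => t * x i) := rfl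
  rw [this, hmev.jointCDF_scale hx ht, ht_def, inv_inv,
    Real.rpow_def_of_pos hu0]
  congr 1
  ring

/-- Expectation of `Z`: `E[Z] = l/(l+1)`. -/
lemma IsMEVFrechet.Zfun_integral (hmev : IsMEVFrechet μ X) (hd : 0 < d) {x : Fin d → ℝ}
    (hx : ∀ i, 0 < x i) :
    ∫ ω, Zfun μ X hd x (fun j => X j ω) ∂μ = stdf μ X x / (stdf μ X x + 1) := by
  set l := stdf μ X x with hl_def
  have hl : 0 ≤ l := stdf_nonneg x
  set Z : Ω → ℝ := fun ω => Zfun μ X hd x (fun j => X j ω) with hZ_def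
  have hZmeas : Measurable Z :=
    (Zfun_measurable hd fun i => (hx i).le).comp (measurable_pi_iff.2 hmev.meas)
  have hZ0 : ∀ ω, 0 ≤ Z ω := fun ω => Zfun_nonneg hd _
  have hZ1 : ∀ ω, Z ω ≤ 1 := fun ω => Zfun_le_one hd (fun i => (hx i).le) _
  have hint : Integrable Z μ := by
    refine (integrable_const (1:ℝ)).mono' hZmeas.aestronglyMeasurable ?_
    filter_upwards with ω
    rw [Real.norm_eq_abs, abs_le]
    exact ⟨by linarith [hZ0 ω], hZ1 ω⟩
  rw [hint.integral_eq_integral_meas_lt (Filter.Eventually.of_forall hZ0)]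
  have hcongr : Set.EqOn (fun u => μ.real {a | u < Z a})
      (Set.indicator (Set.Ioo (0:ℝ) 1) (fun u => 1 - u ^ l)) (Set.Ioi 0) := by
    intro u hu
    by_cases hu1 : u < 1
    · rw [Set.indicator_of_mem (Set.mem_Ioo.2 ⟨Set.mem_Ioi.1 hu, hu1⟩)]
      have hcompl : {a | u < Z a} = {a | Z a ≤ u}ᶜ := by
        ext a; simp [not_le]
      show (μ {a | u < Z a}).toReal = _
      rw [hcompl, measure_compl (measurableSet_le hZmeas measurable_const) (measure_ne_top μ _),
        measure_univ, ENNReal.toReal_sub_of_le prob_le_one (by simp), ENNReal.toReal_one]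
      have h2 : (μ {a | Z a ≤ u}).toReal = u ^ l := hmev.Zfun_cdf hd hx (Set.mem_Ioi.1 hu) hu1
      linarith
    · rw [Set.indicator_of_notMem (fun hmem => hu1 hmem.2)]
      show (μ {a | u < Z a}).toReal = 0
      have : {a | u < Z a} = ∅ := by
        ext a
        simp only [Set.mem_setOf_eq, Set.mem_empty_iff_false, iff_false, not_lt]
        have := hZ1 a
        linarith [not_lt.1 hu1]
      simp [this]
  rw [setIntegral_congr_fun measurableSet_Ioi hcongr,
    setIntegral_indicator measurableSet_Ioo,
    Set.inter_eq_self_of_subset_right (Set.Ioo_subset_Ioi_self)]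
  have hIoo : ∫ u in Set.Ioo (0:ℝ) 1, (1 - u ^ l) = ∫ u in (0:ℝ)..1, (1 - u ^ l) := by
    rw [intervalIntegral.integral_of_le zero_le_one, MeasureTheory.integral_Ioc_eq_integral_Ioo]
  rw [hIoo]
  have hintrpow : IntervalIntegrable (fun u : ℝ => u ^ l) MeasureTheory.volume 0 1 :=
    intervalIntegral.intervalIntegrable_rpow (Or.inl hl)
  rw [intervalIntegral.integral_sub intervalIntegrable_const hintrpow,
    intervalIntegral.integral_const, integral_rpow (Or.inl (by linarith : (-1:ℝ) < l)),
    Real.one_rpow, Real.zero_rpow (by linarith : l + 1 ≠ 0)]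
  have hl1 : l + 1 ≠ 0 := by linarith
  field_simp
  simp only [sub_zero, smul_eq_mul]; ring


/-! ### Properties of the empirical CDF -/

lemma empCDF_nonneg' {Ω' : Type*} {d' : ℕ} (Xs : ℕ → Ω' → Fin d' → ℝ) (n : ℕ) (j : Fin d')
    (u : ℝ) (ω : Ω') : 0 ≤ empCDF Xs n j u ω := by
  rw [empCDF]
  apply mul_nonneg (by positivity)
  apply Finset.sum_nonneg
  intro k _
  split <;> norm_num

lemma empCDF_le_one' {Ω' : Type*} {d' : ℕ} (Xs : ℕ → Ω' → Fin d' → ℝ) (n : ℕ) (j : Fin d')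
    (u : ℝ) (ω : Ω') : empCDF Xs n j u ω ≤ 1 := by
  rw [empCDF]
  have hsum : (∑ k ∈ Finset.range n, if Xs k ω j ≤ u then (1:ℝ) else 0) ≤ n := by
    calc (∑ k ∈ Finset.range n, if Xs k ω j ≤ u then (1:ℝ) else 0)
        ≤ ∑ k ∈ Finset.range n, (1:ℝ) := by
          apply Finset.sum_le_sum; intro k _; split <;> norm_num
      _ = n := by simp
  have hpos : (0:ℝ) < (n:ℝ) + 1 := by positivity
  rw [inv_mul_le_iff₀ hpos, mul_one]
  linarith

lemma empCDF_mono' {Ω' : Type*} {d' : ℕ} (Xs : ℕ → Ω' → Fin d' → ℝ) (n : ℕ) (j : Fin d')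
    (ω : Ω') : Monotone fun u => empCDF Xs n j u ω := by
  intro u v huv
  simp only [empCDF]
  apply mul_le_mul_of_nonneg_left _ (by positivity)
  apply Finset.sum_le_sum
  intro k _
  by_cases h : Xs k ω j ≤ u
  · rw [if_pos h, if_pos (h.trans huv)]
  · rw [if_neg h]; split <;> norm_num

/-! ### The deterministic Pólya-type uniform bound -/

lemma polya_bound (G H : ℝ → ℝ) (hGmono : Monotone G) (hHmono : Monotone H)
    (hH0 : ∀ v, 0 ≤ H v) (hH1 : ∀ v, H v ≤ 1) (hG0 : ∀ v, 0 ≤ G v) (hG1 : ∀ v, G v ≤ 1)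
    {M : ℕ} (hM : 2 ≤ M) (w : ℕ → ℝ)
    (hGw : ∀ m, 1 ≤ m → m ≤ M - 1 → G (w m) = (m : ℝ) / M)
    {D : ℝ} (hD : ∀ m, 1 ≤ m → m ≤ M - 1 → |H (w m) - G (w m)| ≤ D) (v : ℝ) :
    |H v - G v| ≤ D + 1 / M := by
  classical
  have hM0 : (0:ℝ) < M := by positivity
  have hD0 : 0 ≤ D := le_trans (abs_nonneg _) (hD 1 le_rfl (by omega))
  set m := Nat.findGreatest (fun k => w k ≤ v) (M - 1) with hm_def
  have hm_le : m ≤ M - 1 := Nat.findGreatest_le _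
  have hGlb : (m : ℝ) / M ≤ G v := by
    rcases Nat.eq_zero_or_pos m with h0 | hpos
    · rw [h0]; simpa using hG0 v
    · have hwm : w m ≤ v := Nat.findGreatest_of_ne_zero hm_def.symm hpos.ne'
      calc (m:ℝ)/M = G (w m) := (hGw m hpos hm_le).symm
        _ ≤ G v := hGmono hwm
  have hGub : G v ≤ ((m : ℝ) + 1) / M := by
    rcases eq_or_lt_of_le hm_le with heq | hlt
    · have hcast : ((m:ℝ) + 1) = M := by
        rw [heq, Nat.cast_sub (by omega : 1 ≤ M), Nat.cast_one]; ring
      rw [hcast, div_self hM0.ne']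
      exact hG1 v
    · have hnot : ¬ (w (m+1) ≤ v) := by
        apply Nat.findGreatest_is_greatest (P := fun k => w k ≤ v) (n := M - 1)
        · omega
        · omega
      have h1 : G v ≤ G (w (m+1)) := hGmono (lt_of_not_ge hnot).le
      rw [hGw (m+1) (by omega) (by omega)] at h1
      push_cast at h1 ⊢
      linarith
  rw [abs_le]
  constructor
  · -- `G v - H v ≤ D + 1/M`
    rw [neg_le, neg_sub]
    rcases Nat.eq_zero_or_pos m with h0 | hpos
    · have h4 : ((m:ℝ)+1)/M = 1/M := by rw [h0]; norm_num
      have := hH0 v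
      rw [h4] at hGub
      linarith
    · have hwm : w m ≤ v := Nat.findGreatest_of_ne_zero hm_def.symm hpos.ne'
      have h1 : H (w m) ≤ H v := hHmono hwm
      have h2 := (abs_le.1 (hD m hpos hm_le)).1
      have h3 : G (w m) = (m:ℝ)/M := hGw m hpos hm_le
      have h5 : ((m:ℝ)+1)/M - (m:ℝ)/M = 1/M := by field_simp; ring
      linarith
  · -- `H v - G v ≤ D + 1/M`
    rcases eq_or_lt_of_le hm_le with heq | hlt
    · have hm1 : (m:ℝ) = (M:ℝ) - 1 := by
        rw [heq, Nat.cast_sub (by omega : 1 ≤ M), Nat.cast_one]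
      have h1 := hH1 v
      have hMR : (1:ℝ) - ((M:ℝ)-1)/M = 1/M := by field_simp; ring
      rw [hm1] at hGlb
      linarith
    · have hnot : ¬ (w (m+1) ≤ v) := by
        apply Nat.findGreatest_is_greatest (P := fun k => w k ≤ v) (n := M - 1)
        · omega
        · omega
      have h1 : H v ≤ H (w (m+1)) := hHmono (lt_of_not_ge hnot).le
      have h2 := (abs_le.1 (hD (m+1) (by omega) (by omega))).2
      have h3 : G (w (m+1)) = ((m:ℝ)+1)/M := by
        rw [hGw (m+1) (by omega) (by omega)]; push_cast; ring
      have h5 : ((m:ℝ)+1)/M - (m:ℝ)/M = 1/M := by field_simp; ring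
      linarith

/-! ### Strong law of large numbers, composed form -/

lemma slln_comp {Ω' : Type*} [MeasurableSpace Ω'] {μ' : Measure Ω'} [IsProbabilityMeasure μ']
    {d' : ℕ} (Xs : ℕ → Ω' → Fin d' → ℝ)
    (hmeas : ∀ n, Measurable (Xs n))
    (hindep : ProbabilityTheory.iIndepFun
      (m := fun _ : ℕ => (inferInstance : MeasurableSpace (Fin d' → ℝ))) Xs μ')
    (hident : ∀ n, Measure.map (Xs n) μ' = Measure.map (Xs 0) μ')
    (g : (Fin d' → ℝ) → ℝ) (hg : Measurable g) (hbdd : ∀ v, |g v| ≤ 1) :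
    ∀ᵐ ω ∂μ', Tendsto (fun n : ℕ => (n:ℝ)⁻¹ * ∑ k ∈ Finset.range n, g (Xs k ω)) atTop
      (nhds (∫ ω, g (Xs 0 ω) ∂μ')) := by
  have hint : Integrable (fun ω => g (Xs 0 ω)) μ' := by
    refine (integrable_const (1:ℝ)).mono' ((hg.comp (hmeas 0)).aestronglyMeasurable) ?_
    filter_upwards with ω
    rw [Real.norm_eq_abs]
    exact hbdd _
  have hindep' : Pairwise (Function.onFun (ProbabilityTheory.IndepFun · · μ') fun k ω => g (Xs k ω)) := by
    intro i j hij
    exact (ProbabilityTheory.iIndepFun.indepFun hindep hij).comp hg hg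
  have hident' : ∀ k, ProbabilityTheory.IdentDistrib (fun ω => g (Xs k ω))
      (fun ω => g (Xs 0 ω)) μ' μ' := by
    intro k
    have h0 : ProbabilityTheory.IdentDistrib (Xs k) (Xs 0) μ' μ' :=
      ⟨(hmeas k).aemeasurable, (hmeas 0).aemeasurable, hident k⟩
    exact h0.comp hg
  have h := ProbabilityTheory.strong_law_ae (fun k ω => g (Xs k ω)) hint hindep' hident'
  filter_upwards [h] with ω hω
  simpa [smul_eq_mul] using hω

/-- Almost sure pointwise convergence of the empirical CDF. -/
lemma empCDF_tendsto {Ω' : Type*} [MeasurableSpace Ω'] {μ' : Measure Ω'}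
    [IsProbabilityMeasure μ'] {d' : ℕ} (Xs : ℕ → Ω' → Fin d' → ℝ)
    (hmeas : ∀ n, Measurable (Xs n))
    (hindep : ProbabilityTheory.iIndepFun
      (m := fun _ : ℕ => (inferInstance : MeasurableSpace (Fin d' → ℝ))) Xs μ')
    (hident : ∀ n, Measure.map (Xs n) μ' = Measure.map (Xs 0) μ')
    (j : Fin d') (u : ℝ) :
    ∀ᵐ ω ∂μ', Tendsto (fun n => empCDF Xs n j u ω) atTop
      (nhds (margCDF μ' (fun i ω' => Xs 0 ω' i) j u)) := by
  set g : (Fin d' → ℝ) → ℝ := fun v => if v j ≤ u then 1 else 0 with hg_def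
  have hg : Measurable g :=
    Measurable.ite (measurableSet_le (measurable_pi_apply j) measurable_const)
      measurable_const measurable_const
  have hbdd : ∀ v, |g v| ≤ 1 := by
    intro v; rw [hg_def]; dsimp only; split <;> norm_num
  have hgint : ∫ ω, g (Xs 0 ω) ∂μ' = margCDF μ' (fun i ω' => Xs 0 ω' i) j u := by
    have hseq : (fun ω => g (Xs 0 ω))
        = Set.indicator {ω | Xs 0 ω j ≤ u} (fun _ => (1:ℝ)) := by
      funext ω
      rw [hg_def, Set.indicator_apply]
      rfl
    have hs : MeasurableSet {ω | Xs 0 ω j ≤ u} :=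
      measurableSet_le ((measurable_pi_apply j).comp (hmeas 0)) measurable_const
    rw [hseq, integral_indicator_const (1:ℝ) hs, margCDF, smul_eq_mul, mul_one, measureReal_def]
  have h := slln_comp Xs hmeas hindep hident g hg hbdd
  rw [hgint] at h
  filter_upwards [h] with ω hω
  have hfrac : Tendsto (fun n : ℕ => (n:ℝ) / ((n:ℝ) + 1)) atTop (nhds 1) :=
    tendsto_natCast_div_add_atTop (1:ℝ)
  have hmul := hfrac.mul hω
  rw [one_mul] at hmul
  refine Tendsto.congr' ?_ hmul
  filter_upwards [eventually_ge_atTop 1] with n hn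
  have hn0 : (n:ℝ) ≠ 0 := by positivity
  have hn1 : (n:ℝ) + 1 ≠ 0 := by positivity
  rw [empCDF]
  field_simp
  ring

end Aux

/-- Strong consistency of the rank-based estimator
`l̂_n = Ŷ_n/(1 - Ŷ_n)` of the stable tail dependence function:
`l̂_n(x₁,…,x_d) → l(x₁,…,x_d)` almost surely. -/
theorem statement19 {Ω : Type*} [MeasurableSpace Ω] (μ : Measure Ω) [IsProbabilityMeasure μ]
    {d : ℕ} (hd : 0 < d) (Xs : ℕ → Ω → Fin d → ℝ)
    (hmeas : ∀ n, Measurable (Xs n))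
    (hindep : ProbabilityTheory.iIndepFun
      (m := fun _ : ℕ => (inferInstance : MeasurableSpace (Fin d → ℝ))) Xs μ)
    (hident : ∀ n, Measure.map (Xs n) μ = Measure.map (Xs 0) μ)
    (hmev : IsMEVFrechet μ (fun i ω => Xs 0 ω i))
    (x : Fin d → ℝ) (hx : ∀ i, 0 < x i) :
    ∀ᵐ ω ∂μ, Tendsto (fun n => Yhat hd Xs x n ω / (1 - Yhat hd Xs x n ω)) atTop
      (nhds (stdf μ (fun i ω' => Xs 0 ω' i) x)) := by
  classical
  set X : Fin d → Ω → ℝ := fun i ω => Xs 0 ω i with hX_def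
  set l := stdf μ X x with hl_def
  have hl0 : 0 ≤ l := stdf_nonneg x
  have hl1 : (0:ℝ) < l + 1 := by linarith
  set m : ℝ := l / (l + 1) with hm_def
  have hm1 : m < 1 := by rw [hm_def, div_lt_one hl1]; linarith
  have hm0 : 0 ≤ m := by positivity
  have hx0 : ∀ i, 0 ≤ x i := fun i => (hx i).le
  -- the grid points
  set w : ℕ → ℕ → ℝ := fun M mm => (-Real.log ((mm:ℝ)/M))⁻¹ with hw_def
  -- grid values of the marginal CDF
  have hgridval : ∀ (j : Fin d) (M mm : ℕ), 2 ≤ M → 1 ≤ mm → mm ≤ M - 1 →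
      margCDF μ X j (w M mm) = (mm:ℝ)/M := by
    intro j M mm hM hmm1 hmm2
    have hq0 : (0:ℝ) < (mm:ℝ)/M := by
      apply div_pos
      · exact_mod_cast hmm1
      · have : 0 < M := by omega
        exact_mod_cast this
    have hq1 : (mm:ℝ)/M < 1 := by
      rw [div_lt_one (by positivity : (0:ℝ) < (M:ℝ))]
      have : mm < M := by omega
      exact_mod_cast this
    have hlog : Real.log ((mm:ℝ)/M) < 0 := Real.log_neg hq0 hq1
    have hu : 0 < w M mm := by
      rw [hw_def]
      exact inv_pos.2 (by linarith)
    rw [hmev.frechet j _ hu]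
    rw [hw_def]
    simp only [inv_inv]
    rw [neg_neg, Real.exp_log hq0]
  -- the three almost-sure events
  have hbddZ : ∀ v, |Zfun μ X hd x v| ≤ 1 := by
    intro v
    rw [abs_le]
    exact ⟨by linarith [Zfun_nonneg (μ := μ) (X := X) hd (x := x) v], Zfun_le_one hd hx0 v⟩
  have hZae := slln_comp Xs hmeas hindep hident (Zfun μ X hd x)
    (Zfun_measurable hd hx0) hbddZ
  have hEZ : (∫ ω, Zfun μ X hd x (Xs 0 ω) ∂μ) = m := hmev.Zfun_integral hd hx
  rw [hEZ] at hZae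
  have hGridae : ∀ᵐ ω ∂μ, ∀ (j : Fin d) (M mm : ℕ),
      Tendsto (fun n => empCDF Xs n j (w M mm) ω) atTop (nhds (margCDF μ X j (w M mm))) := by
    rw [ae_all_iff]
    intro j
    rw [ae_all_iff]
    intro M
    rw [ae_all_iff]
    intro mm
    exact empCDF_tendsto Xs hmeas hindep hident j (w M mm)
  filter_upwards [hZae, hGridae] with ω hZω hGridω
  set Zbar : ℕ → ℝ := fun n => (n:ℝ)⁻¹ * ∑ k ∈ Finset.range n, Zfun μ X hd x (Xs k ω)
    with hZbar_def
  -- Step (i): eventual closeness of `Yhat` and `Zbar`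
  have key : ∀ ε₂ : ℝ, 0 < ε₂ → ∀ᶠ n in atTop, |Yhat hd Xs x n ω - Zbar n| ≤ ε₂ := by
    intro ε₂ hε₂
    -- uniform continuity of the power functions
    have hUCj : ∀ j : Fin d, ∃ δ > 0, ∀ a ∈ Set.Icc (0:ℝ) 1, ∀ b ∈ Set.Icc (0:ℝ) 1,
        |a - b| < δ → |a ^ x j - b ^ x j| < ε₂ := by
      intro j
      have hcont : ContinuousOn (fun t : ℝ => t ^ x j) (Set.Icc 0 1) :=
        (Real.continuous_rpow_const (hx j).le).continuousOn
      have huc := isCompact_Icc.uniformContinuousOn_of_continuous hcont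
      rw [Metric.uniformContinuousOn_iff] at huc
      obtain ⟨δ, hδ0, hδ⟩ := huc ε₂ hε₂
      refine ⟨δ, hδ0, fun a ha b hb hab => ?_⟩
      have := hδ a ha b hb (by rwa [Real.dist_eq])
      rwa [Real.dist_eq] at this
    choose δf hδf0 hδf using hUCj
    set δ : ℝ := Finset.univ.inf' ⟨⟨0, hd⟩, Finset.mem_univ _⟩ δf with hδ_def
    have hδ0 : 0 < δ := by
      rw [hδ_def]
      exact (Finset.lt_inf'_iff ..).2 fun j _ => hδf0 j
    have hδle : ∀ j : Fin d, δ ≤ δf j := fun j =>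
      Finset.inf'_le _ (Finset.mem_univ j)
    -- choose the grid size M
    obtain ⟨M₀, hM₀⟩ := exists_nat_gt (2/δ)
    set M : ℕ := max M₀ 2 with hM_def
    have hM2 : 2 ≤ M := le_max_right _ _
    have hMR : (2:ℝ)/δ < M := by
      refine hM₀.trans_le ?_
      exact_mod_cast le_max_left M₀ 2
    have hMpos : (0:ℝ) < M := by positivity
    have h1M : 1/(M:ℝ) < δ/2 := by
      rw [div_lt_iff₀ hδ0] at hMR
      rw [div_lt_div_iff₀ hMpos (by norm_num : (0:ℝ) < 2)]
      linarith
    -- eventual closeness on the grid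
    have hDn : ∀ᶠ n in atTop, ∀ j : Fin d, ∀ mm ∈ Finset.Icc 1 (M-1),
        |empCDF Xs n j (w M mm) ω - margCDF μ X j (w M mm)| ≤ δ/2 := by
      rw [Filter.eventually_all]
      intro j
      rw [Filter.eventually_all_finset]
      intro mm _
      have := Metric.tendsto_atTop.1 (hGridω j M mm) (δ/2) (by positivity)
      obtain ⟨N, hN⟩ := this
      rw [Filter.eventually_atTop]
      exact ⟨N, fun n hn => le_of_lt (by simpa [Real.dist_eq] using hN n hn)⟩
    filter_upwards [hDn, Filter.eventually_ge_atTop 1] with n hDnω hn1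
    -- uniform bound over all real arguments, via the Pólya-type lemma
    have hunif : ∀ (j : Fin d) (v : ℝ),
        |empCDF Xs n j v ω - margCDF μ X j v| < δ := by
      intro j v
      have hpb := polya_bound (margCDF μ X j) (fun v => empCDF Xs n j v ω)
        (margCDF_mono j) (empCDF_mono' Xs n j ω)
        (fun v => empCDF_nonneg' Xs n j v ω) (fun v => empCDF_le_one' Xs n j v ω)
        (fun v => margCDF_nonneg j v) (fun v => margCDF_le_one j v)
        hM2 (w M) (fun mm h1 h2 => hgridval j M mm hM2 h1 h2)
        (D := δ/2) (fun mm h1 h2 => hDnω j mm (Finset.mem_Icc.2 ⟨h1, h2⟩)) v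
      calc |empCDF Xs n j v ω - margCDF μ X j v| ≤ δ/2 + 1/M := hpb
        _ < δ/2 + δ/2 := by linarith
        _ = δ := by ring
    -- per-sample bound
    have hsample : ∀ i ∈ Finset.range n,
        |(Finset.univ.sup' ⟨⟨0, hd⟩, Finset.mem_univ _⟩
            fun j => empCDF Xs n j (Xs i ω j) ω ^ x j)
          - Zfun μ X hd x (Xs i ω)| ≤ ε₂ := by
      intro i _
      apply abs_sup'_sub_sup'_le
      intro j _
      have ha : empCDF Xs n j (Xs i ω j) ω ∈ Set.Icc (0:ℝ) 1 :=
        ⟨empCDF_nonneg' Xs n j _ ω, empCDF_le_one' Xs n j _ ω⟩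
      have hb : margCDF μ X j (Xs i ω j) ∈ Set.Icc (0:ℝ) 1 :=
        ⟨margCDF_nonneg j _, margCDF_le_one j _⟩
      have habd : |empCDF Xs n j (Xs i ω j) ω - margCDF μ X j (Xs i ω j)| < δf j :=
        lt_of_lt_of_le (hunif j (Xs i ω j)) (hδle j)
      exact (hδf j _ ha _ hb habd).le
    -- average the per-sample bounds
    have hn0 : (0:ℝ) < (n:ℝ) := by exact_mod_cast hn1
    rw [Yhat, hZbar_def]
    rw [← mul_sub, abs_mul, abs_of_nonneg (by positivity : (0:ℝ) ≤ (n:ℝ)⁻¹),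
      ← Finset.sum_sub_distrib]
    calc (n:ℝ)⁻¹ * |∑ i ∈ Finset.range n, _| ≤ (n:ℝ)⁻¹ * ∑ i ∈ Finset.range n,
          |(Finset.univ.sup' ⟨⟨0, hd⟩, Finset.mem_univ _⟩
              fun j => empCDF Xs n j (Xs i ω j) ω ^ x j)
            - Zfun μ X hd x (Xs i ω)| := by
          apply mul_le_mul_of_nonneg_left (Finset.abs_sum_le_sum_abs _ _) (by positivity)
      _ ≤ (n:ℝ)⁻¹ * ∑ i ∈ Finset.range n, ε₂ := by
          apply mul_le_mul_of_nonneg_left (Finset.sum_le_sum hsample) (by positivity)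
      _ = ε₂ := by
          rw [Finset.sum_const, Finset.card_range, nsmul_eq_mul]
          field_simp
  -- Step (ii): `Yhat → m`
  have hY : Tendsto (fun n => Yhat hd Xs x n ω) atTop (nhds m) := by
    rw [Metric.tendsto_atTop]
    intro ε hε
    obtain ⟨N₁, hN₁⟩ := Metric.tendsto_atTop.1 hZω (ε/2) (by positivity)
    obtain ⟨N₂, hN₂⟩ := Filter.eventually_atTop.1 (key (ε/4) (by positivity))
    refine ⟨max N₁ N₂, fun n hn => ?_⟩
    have h1 := hN₁ n (le_trans (le_max_left _ _) hn)
    have h2 := hN₂ n (le_trans (le_max_right _ _) hn)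
    rw [Real.dist_eq] at h1 ⊢
    have : |Yhat hd Xs x n ω - m| ≤ |Yhat hd Xs x n ω - Zbar n| + |Zbar n - m| := by
      have := abs_sub_le (Yhat hd Xs x n ω) (Zbar n) m
      linarith
    linarith
  -- Step (iii): conclude by continuity of `y ↦ y/(1-y)` at `m`
  have h1Y : Tendsto (fun n => 1 - Yhat hd Xs x n ω) atTop (nhds (1 - m)) :=
    tendsto_const_nhds.sub hY
  have h1m : (1:ℝ) - m ≠ 0 := by linarith
  have hdiv := hY.div h1Y h1m
  have hml : m / (1 - m) = l := by
    rw [hm_def]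
    field_simp
    ring
  rw [hml] at hdiv
  exact hdiv
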